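/- arXiv:1512.04856 — 5 statements merged into one kernel-verified Lean document; each statement's English description precedes it below -/
import Mathlib

section
/- Let d ≥ 1, let P ⊂ ℝ^d be a finite set of n points and q ∈ ℝ^d. Then σ_P(q) ≤ τ_P(q) · n^d, where σ_P(q) is the simplicial depth and τ_P(q) is the Tukey depth of q with respect to P. -/
set_option maxHeartbeats 1000000


/-- The simplicial depth of `q` with respect to a finite point set `P` in `ℝ^d`:
the number of `(d+1)`-element subsets of `P` whose convex hull contains `q`. -/
noncomputable def simplicialDepth (d : ℕ) (P : Finset (EuclideanSpace ℝ (Fin d)))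
    (q : EuclideanSpace ℝ (Fin d)) : ℕ :=
  {S : Finset (EuclideanSpace ℝ (Fin d)) |
    S ⊆ P ∧ S.card = d + 1 ∧ q ∈ convexHull ℝ (S : Set (EuclideanSpace ℝ (Fin d)))}.ncard

/-- The Tukey depth of `q` with respect to `P`: the minimum number of points of `P`
contained in a closed halfspace containing `q`. -/
noncomputable def tukeyDepth (d : ℕ) (P : Finset (EuclideanSpace ℝ (Fin d)))
    (q : EuclideanSpace ℝ (Fin d)) : ℕ :=
  sInf {k : ℕ | ∃ (v : EuclideanSpace ℝ (Fin d)) (c : ℝ), v ≠ 0 ∧ (inner ℝ v q : ℝ) ≤ c ∧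
    {x ∈ (P : Set (EuclideanSpace ℝ (Fin d))) | (inner ℝ v x : ℝ) ≤ c}.ncard = k}

/-- `σ_P(q) ≤ τ_P(q) · n^d`. -/
theorem simplicialDepth_le_tukeyDepth_mul (d : ℕ) (hd : 1 ≤ d)
    (P : Finset (EuclideanSpace ℝ (Fin d))) (q : EuclideanSpace ℝ (Fin d)) :
    simplicialDepth d P q ≤ tukeyDepth d P q * P.card ^ d := by
  classical
  -- the defining set for Tukey depth is nonempty
  have hne : {k : ℕ | ∃ (v : EuclideanSpace ℝ (Fin d)) (c : ℝ), v ≠ 0 ∧ (inner ℝ v q : ℝ) ≤ c ∧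
      {x ∈ (P : Set (EuclideanSpace ℝ (Fin d))) | (inner ℝ v x : ℝ) ≤ c}.ncard = k}.Nonempty := by
    refine ⟨_, EuclideanSpace.single ⟨0, hd⟩ (1 : ℝ),
      inner ℝ (EuclideanSpace.single ⟨0, hd⟩ (1 : ℝ)) q, ?_, le_refl _, rfl⟩
    intro h
    have := congrArg (fun f : EuclideanSpace ℝ (Fin d) => f ⟨0, hd⟩) h
    simp at this
  obtain ⟨v, c, hv, hqc, hcard⟩ := Nat.sInf_mem hne
  set H : Finset (EuclideanSpace ℝ (Fin d)) := P.filter (fun x => (inner ℝ v x : ℝ) ≤ c) with hH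
  have hHcard : H.card = tukeyDepth d P q := by
    have : {x ∈ (P : Set (EuclideanSpace ℝ (Fin d))) | (inner ℝ v x : ℝ) ≤ c} = ↑H := by
      ext x; simp [hH]
    rw [this, Set.ncard_coe_finset] at hcard
    exact hcard
  set 𝒮 : Finset (Finset (EuclideanSpace ℝ (Fin d))) := (P.powersetCard (d + 1)).filter
    (fun S => q ∈ convexHull ℝ (S : Set (EuclideanSpace ℝ (Fin d)))) with hS
  have hset : {S : Finset (EuclideanSpace ℝ (Fin d)) |
      S ⊆ P ∧ S.card = d + 1 ∧ q ∈ convexHull ℝ (S : Set (EuclideanSpace ℝ (Fin d)))} = ↑𝒮 := by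
    ext S
    simp [hS, Finset.mem_powersetCard, and_assoc]
  have hσ : simplicialDepth d P q = 𝒮.card := by
    rw [simplicialDepth, hset, Set.ncard_coe_finset]
  have key : ∀ S ∈ 𝒮, ∃ p ∈ S, p ∈ H := by
    intro S hSmem
    simp only [hS, Finset.mem_filter, Finset.mem_powersetCard] at hSmem
    obtain ⟨⟨hSP, _⟩, hq⟩ := hSmem
    by_contra hcon
    push_neg at hcon
    have hsub : (S : Set (EuclideanSpace ℝ (Fin d))) ⊆
        {x : EuclideanSpace ℝ (Fin d) | c < (inner ℝ v x : ℝ)} := by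
      intro x hx
      have hxP : x ∈ P := hSP hx
      have := hcon x hx
      simp only [hH, Finset.mem_filter] at this
      exact lt_of_not_ge fun h => this ⟨hxP, h⟩
    have hconv : Convex ℝ {x : EuclideanSpace ℝ (Fin d) | c < (inner ℝ v x : ℝ)} :=
      convex_halfSpace_gt ⟨fun a b => inner_add_right v a b,
        fun r x => real_inner_smul_right v x r⟩ c
    have := convexHull_min hsub hconv hq
    exact absurd hqc (not_le.mpr this)
  have hsub : 𝒮 ⊆ (H ×ˢ P.powersetCard d).image (fun pT => insert pT.1 pT.2) := by
    intro S hSmem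
    obtain ⟨p, hpS, hpH⟩ := key S hSmem
    simp only [hS, Finset.mem_filter, Finset.mem_powersetCard] at hSmem
    obtain ⟨⟨hSP, hScard⟩, _⟩ := hSmem
    refine Finset.mem_image.mpr ⟨(p, S.erase p), ?_, ?_⟩
    · refine Finset.mem_product.mpr ⟨hpH, Finset.mem_powersetCard.mpr
        ⟨(Finset.erase_subset p S).trans hSP, ?_⟩⟩
      rw [Finset.card_erase_of_mem hpS, hScard]; omega
    · exact Finset.insert_erase hpS
  calc simplicialDepth d P q = 𝒮.card := hσ
    _ ≤ ((H ×ˢ P.powersetCard d).image (fun pT => insert pT.1 pT.2)).card :=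
        Finset.card_le_card hsub
    _ ≤ (H ×ˢ P.powersetCard d).card := Finset.card_image_le
    _ = H.card * P.card.choose d := by rw [Finset.card_product, Finset.card_powersetCard]
    _ ≤ tukeyDepth d P q * P.card ^ d := by
        rw [hHcard]
        exact Nat.mul_le_mul_left _ (Nat.choose_le_pow _ _)
end

section
/- Let d ≥ 1, let P ⊂ ℝ^d be a finite set, q ∈ ℝ^d with σ_P(q) > 0, let L ⊆ P and P' = P ∖ L, and let M > 0 be a real number such that ω_{q;P}(p) ≤ M for every p ∈ P'. Let μ = 2^{−|P'|} Σ_{T ⊆ P'} σ_{L∪T}(q) be the expected simplicial depth over a uniformly random subset T of P'. Then for every t > 0, the number of subsets T ⊆ P' with |σ_{L∪T}(q) − μ| ≥ t is at most 2^{|P'|} · 2·exp(−t² / (2(d+1)·M·σ_P(q))). Equivalently, for a uniformly random subset T of P', Pr[|σ_{L∪T}(q) − μ| ≥ t] ≤ 2·exp(−t²/(2(d+1)Mσ_P(q))). -/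
open scoped Classical

/-- The weight `ω_{q;P}(p)`: the number of `(d+1)`-element subsets of `P` containing
`p` whose convex hull contains `q`. -/
noncomputable def weight (d : ℕ) (P : Finset (EuclideanSpace ℝ (Fin d)))
    (q p : EuclideanSpace ℝ (Fin d)) : ℕ :=
  {S : Finset (EuclideanSpace ℝ (Fin d)) |
    S ⊆ P ∧ S.card = d + 1 ∧ p ∈ S ∧
      q ∈ convexHull ℝ (S : Set (EuclideanSpace ℝ (Fin d)))}.ncard

/-- A discrete Hoeffding/Azuma inequality for the exponential moment of a function on the
powerset of a finite set, with per-coordinate Lipschitz constants `c p`. -/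
lemma hoeffding_powerset {α : Type*} [DecidableEq α] (l : ℝ) (c : α → ℝ) :
    ∀ (A : Finset α) (f : Finset α → ℝ),
      (∀ p ∈ A, ∀ T ⊆ A, |f (insert p T) - f T| ≤ c p) →
      (∑ T ∈ A.powerset, f T = 0) →
      ∑ T ∈ A.powerset, Real.exp (l * f T) ≤
        2 ^ A.card * Real.exp (l ^ 2 * (∑ p ∈ A, (c p) ^ 2) / 8) := by
  intro A
  induction A using Finset.induction_on with
  | empty =>
      intro f _ hmean
      simp only [Finset.powerset_empty, Finset.sum_singleton] at hmean ⊢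
      rw [hmean]
      simp
  | @insert a s ha ih =>
      intro f hlip hmean
      set g : Finset α → ℝ := fun T => (f T + f (insert a T)) / 2 with hg
      rw [Finset.sum_powerset_insert ha] at hmean ⊢
      have hgmean : ∑ T ∈ s.powerset, g T = 0 := by
        simp only [hg]
        rw [← Finset.sum_div, Finset.sum_add_distrib, hmean]
        norm_num
      have hglip : ∀ p ∈ s, ∀ T ⊆ s, |g (insert p T) - g T| ≤ c p := by
        intro p hp T hT
        have h1 := hlip p (Finset.mem_insert_of_mem hp) T (hT.trans (Finset.subset_insert a s))
        have h2 := hlip p (Finset.mem_insert_of_mem hp) (insert a T)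
          (Finset.insert_subset_insert a hT)
        have hcomm : insert a (insert p T) = insert p (insert a T) := Finset.insert_comm a p T
        have heq : g (insert p T) - g T =
            ((f (insert p T) - f T) + (f (insert p (insert a T)) - f (insert a T))) / 2 := by
          simp only [hg, hcomm]; ring
        rw [heq]
        calc |((f (insert p T) - f T) + (f (insert p (insert a T)) - f (insert a T))) / 2|
            ≤ (|f (insert p T) - f T| + |f (insert p (insert a T)) - f (insert a T)|) / 2 := by
              rw [abs_div, abs_two]
              gcongr
              exact abs_add_le _ _
          _ ≤ (c p + c p) / 2 := by linarith
          _ = c p := by ring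
      have key : ∀ T ∈ s.powerset,
          Real.exp (l * f T) + Real.exp (l * f (insert a T)) ≤
            Real.exp (l ^ 2 * (c a) ^ 2 / 8) * (2 * Real.exp (l * g T)) := by
        intro T hT
        set δ := (f (insert a T) - f T) / 2 with hδ
        have hfT : f T = g T - δ := by simp only [hg, hδ]; ring
        have hfaT : f (insert a T) = g T + δ := by simp only [hg, hδ]; ring
        have hδle : |δ| ≤ c a / 2 := by
          have h := hlip a (Finset.mem_insert_self a s) T
            ((Finset.mem_powerset.1 hT).trans (Finset.subset_insert a s))
          have : |f (insert a T) - f T| = 2 * |δ| := by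
            rw [hδ, abs_div]
            norm_num
            ring
          linarith [this ▸ h]
        have hcosh : Real.cosh (l * δ) ≤ Real.exp ((l * δ) ^ 2 / 2) :=
          Real.cosh_le_exp_half_sq _
        have hsq : (l * δ) ^ 2 / 2 ≤ l ^ 2 * (c a) ^ 2 / 8 := by
          have h0 : (0:ℝ) ≤ c a / 2 := le_trans (abs_nonneg δ) hδle
          have hsq0 : δ ^ 2 ≤ (c a / 2) ^ 2 := by
            nlinarith [sq_abs δ, abs_nonneg δ]
          have h1 := mul_le_mul_of_nonneg_left hsq0 (sq_nonneg l)
          nlinarith [h1]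
        have hstep : Real.exp (l * f T) + Real.exp (l * f (insert a T))
            = Real.exp (l * g T) * (2 * Real.cosh (l * δ)) := by
          rw [hfT, hfaT, Real.cosh_eq, mul_sub, mul_add, sub_eq_add_neg,
            Real.exp_add, Real.exp_add]
          ring
        rw [hstep]
        have hc := hcosh.trans (Real.exp_le_exp.mpr hsq)
        have hx := (Real.exp_pos (l * g T)).le
        nlinarith [Real.exp_pos (l * g T)]
      have hsum : ∑ T ∈ s.powerset, Real.exp (l * f T)
            + ∑ T ∈ s.powerset, Real.exp (l * f (insert a T))
          ≤ Real.exp (l ^ 2 * (c a) ^ 2 / 8) * (2 * ∑ T ∈ s.powerset, Real.exp (l * g T)) := by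
        rw [← Finset.sum_add_distrib]
        calc ∑ T ∈ s.powerset, (Real.exp (l * f T) + Real.exp (l * f (insert a T)))
            ≤ ∑ T ∈ s.powerset, Real.exp (l ^ 2 * (c a) ^ 2 / 8) * (2 * Real.exp (l * g T)) :=
              Finset.sum_le_sum key
          _ = Real.exp (l ^ 2 * (c a) ^ 2 / 8) * (2 * ∑ T ∈ s.powerset, Real.exp (l * g T)) := by
              rw [Finset.mul_sum, Finset.mul_sum]
      have iha := ih g hglip hgmean
      have hfinal : Real.exp (l ^ 2 * (c a) ^ 2 / 8) * (2 * ∑ T ∈ s.powerset, Real.exp (l * g T))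
          ≤ 2 ^ (insert a s).card *
            Real.exp (l ^ 2 * (∑ p ∈ insert a s, (c p) ^ 2) / 8) := by
        rw [Finset.card_insert_of_notMem ha, Finset.sum_insert ha]
        have h2 : (0:ℝ) < Real.exp (l ^ 2 * (c a) ^ 2 / 8) := Real.exp_pos _
        calc Real.exp (l ^ 2 * (c a) ^ 2 / 8) * (2 * ∑ T ∈ s.powerset, Real.exp (l * g T))
            ≤ Real.exp (l ^ 2 * (c a) ^ 2 / 8) *
                (2 * (2 ^ s.card * Real.exp (l ^ 2 * (∑ p ∈ s, (c p) ^ 2) / 8))) := by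
              apply mul_le_mul_of_nonneg_left _ h2.le
              linarith
          _ = 2 ^ (s.card + 1) *
              Real.exp (l ^ 2 * ((c a) ^ 2 + ∑ p ∈ s, (c p) ^ 2) / 8) := by
              rw [show l ^ 2 * ((c a) ^ 2 + ∑ p ∈ s, (c p) ^ 2) / 8 =
                  l ^ 2 * (c a) ^ 2 / 8 + l ^ 2 * (∑ p ∈ s, (c p) ^ 2) / 8 from by ring,
                Real.exp_add, pow_succ]
              ring
      linarith [hsum, hfinal]

/-- The finset of `(d+1)`-element subsets of `B` whose convex hull contains `q`. -/
noncomputable def simpF (d : ℕ) (B : Finset (EuclideanSpace ℝ (Fin d)))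
    (q : EuclideanSpace ℝ (Fin d)) : Finset (Finset (EuclideanSpace ℝ (Fin d))) :=
  B.powerset.filter (fun (S : Finset (EuclideanSpace ℝ (Fin d))) =>
    S.card = d + 1 ∧ q ∈ convexHull ℝ (S : Set (EuclideanSpace ℝ (Fin d))))

lemma simplicialDepth_eq_card (d : ℕ) (B : Finset (EuclideanSpace ℝ (Fin d)))
    (q : EuclideanSpace ℝ (Fin d)) :
    simplicialDepth d B q = (simpF d B q).card := by
  rw [simplicialDepth, ← Set.ncard_coe_finset]
  congr 1
  ext S
  simp [simpF, Finset.mem_powerset, and_assoc]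

lemma weight_eq_card (d : ℕ) (P : Finset (EuclideanSpace ℝ (Fin d)))
    (q p : EuclideanSpace ℝ (Fin d)) :
    weight d P q p = ((simpF d P q).filter (fun S => p ∈ S)).card := by
  rw [weight, ← Set.ncard_coe_finset]
  congr 1
  ext S
  simp [simpF, Finset.mem_powerset]
  tauto

lemma simpF_mono (d : ℕ) {B B' : Finset (EuclideanSpace ℝ (Fin d))}
    (q : EuclideanSpace ℝ (Fin d)) (h : B ⊆ B') : simpF d B q ⊆ simpF d B' q := by
  intro S hS
  simp only [simpF, Finset.mem_filter, Finset.mem_powerset] at hS ⊢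
  exact ⟨hS.1.trans h, hS.2⟩

/-- Azuma-type concentration: if every point of `P' = P \ L` has weight
at most `M`, then the number of subsets `T ⊆ P'` on which `σ_{L∪T}(q)` deviates from
its mean `μ` by at least `t` is at most
`2^{|P'|} · 2·exp(−t²/(2(d+1)·M·σ_P(q)))`. -/
theorem simplicialDepth_concentration (d : ℕ) (hd : 1 ≤ d)
    (P : Finset (EuclideanSpace ℝ (Fin d))) (q : EuclideanSpace ℝ (Fin d))
    (hσ : 0 < simplicialDepth d P q)
    (L : Finset (EuclideanSpace ℝ (Fin d))) (hL : L ⊆ P)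
    (M : ℝ) (hM : 0 < M)
    (hw : ∀ p ∈ P \ L, (weight d P q p : ℝ) ≤ M)
    (μ : ℝ)
    (hμ : μ = (∑ T ∈ (P \ L).powerset, (simplicialDepth d (L ∪ T) q : ℝ)) /
            2 ^ (P \ L).card)
    (t : ℝ) (ht : 0 < t) :
    ({T : Finset (EuclideanSpace ℝ (Fin d)) | T ⊆ P \ L ∧
        t ≤ |(simplicialDepth d (L ∪ T) q : ℝ) - μ|}.ncard : ℝ)
      ≤ 2 ^ (P \ L).card *
          (2 * Real.exp (-(t ^ 2) /
            (2 * (d + 1) * M * simplicialDepth d P q))) := by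
  classical
  set A : Finset (EuclideanSpace ℝ (Fin d)) := P \ L with hA
  set σr : ℝ := (simplicialDepth d P q : ℝ) with hσr
  have hσpos : (0:ℝ) < σr := by rw [hσr]; exact_mod_cast hσ
  set c : EuclideanSpace ℝ (Fin d) → ℝ := fun p => (weight d P q p : ℝ) with hc
  set f : Finset (EuclideanSpace ℝ (Fin d)) → ℝ :=
    fun T => (simplicialDepth d (L ∪ T) q : ℝ) - μ with hf
  -- Lipschitz property
  have hlip : ∀ p ∈ A, ∀ T ⊆ A, |f (insert p T) - f T| ≤ c p := by
    intro p hp T hT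
    have hpP : p ∈ P := (Finset.mem_sdiff.1 hp).1
    have hBP : L ∪ T ⊆ P := Finset.union_subset hL (hT.trans (Finset.sdiff_subset))
    have hins : L ∪ insert p T = insert p (L ∪ T) := by
      ext x
      simp [Finset.mem_union, Finset.mem_insert]
    have h1 : simplicialDepth d (L ∪ T) q ≤ simplicialDepth d (insert p (L ∪ T)) q := by
      rw [simplicialDepth_eq_card, simplicialDepth_eq_card]
      exact Finset.card_le_card (simpF_mono d q (Finset.subset_insert _ _))
    have h2 : simplicialDepth d (insert p (L ∪ T)) q
        ≤ simplicialDepth d (L ∪ T) q + weight d P q p := by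
      rw [simplicialDepth_eq_card, simplicialDepth_eq_card, weight_eq_card]
      have hsub : simpF d (insert p (L ∪ T)) q ⊆
          simpF d (L ∪ T) q ∪ (simpF d P q).filter (fun S => p ∈ S) := by
        intro S hS
        simp only [simpF, Finset.mem_filter, Finset.mem_powerset] at hS
        by_cases hpS : p ∈ S
        · apply Finset.mem_union_right
          simp only [simpF, Finset.mem_filter, Finset.mem_powerset]
          exact ⟨⟨hS.1.trans (Finset.insert_subset hpP hBP), hS.2⟩, hpS⟩
        · apply Finset.mem_union_left
          simp only [simpF, Finset.mem_filter, Finset.mem_powerset]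
          refine ⟨fun x hx => ?_, hS.2⟩
          rcases Finset.mem_insert.1 (hS.1 hx) with h | h
          · exact absurd (h ▸ hx) hpS
          · exact h
      calc (simpF d (insert p (L ∪ T)) q).card
          ≤ (simpF d (L ∪ T) q ∪ (simpF d P q).filter (fun S => p ∈ S)).card :=
            Finset.card_le_card hsub
        _ ≤ _ := Finset.card_union_le _ _
    have r1 : (simplicialDepth d (L ∪ T) q : ℝ) ≤ (simplicialDepth d (insert p (L ∪ T)) q : ℝ) := by
      exact_mod_cast h1
    have r2 : (simplicialDepth d (insert p (L ∪ T)) q : ℝ)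
        ≤ (simplicialDepth d (L ∪ T) q : ℝ) + (weight d P q p : ℝ) := by
      exact_mod_cast h2
    simp only [hf, hins]
    rw [abs_of_nonneg (by linarith)]
    simp only [hc]
    linarith
  -- mean zero
  have hmean : ∑ T ∈ A.powerset, f T = 0 := by
    simp only [hf, Finset.sum_sub_distrib, Finset.sum_const, Finset.card_powerset,
      nsmul_eq_mul]
    rw [hμ]
    have h2n : ((2:ℝ) ^ A.card) ≠ 0 := by positivity
    push_cast
    field_simp
    ring
  -- bound on sum of squares of Lipschitz constants
  have hsumnat : ∑ p ∈ A, weight d P q p ≤ (d + 1) * simplicialDepth d P q := by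
    calc ∑ p ∈ A, weight d P q p
        = ∑ p ∈ A, ((simpF d P q).filter (fun S => p ∈ S)).card := by
          simp_rw [weight_eq_card]
      _ = ∑ p ∈ A, ∑ S ∈ simpF d P q, if p ∈ S then 1 else 0 := by
          simp_rw [Finset.card_filter]
      _ = ∑ S ∈ simpF d P q, ∑ p ∈ A, if p ∈ S then 1 else 0 := Finset.sum_comm
      _ = ∑ S ∈ simpF d P q, (A.filter (fun p => p ∈ S)).card := by
          simp_rw [Finset.card_filter]
      _ ≤ ∑ S ∈ simpF d P q, (d + 1) := by
          apply Finset.sum_le_sum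
          intro S hS
          have hcard : S.card = d + 1 :=
            (Finset.mem_filter.1 hS).2.1
          calc (A.filter (fun p => p ∈ S)).card
              ≤ S.card := Finset.card_le_card (fun x hx => (Finset.mem_filter.1 hx).2)
            _ = d + 1 := hcard
      _ = (simpF d P q).card * (d + 1) := by rw [Finset.sum_const, smul_eq_mul]
      _ = (d + 1) * simplicialDepth d P q := by
          rw [simplicialDepth_eq_card d P q, mul_comm]
  set W : ℝ := ((d:ℝ) + 1) * M * σr with hW
  have hWpos : 0 < W := by
    apply mul_pos (mul_pos _ hM) hσpos
    positivity
  have hVW : ∑ p ∈ A, (c p) ^ 2 ≤ W := by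
    have hcsum : ∑ p ∈ A, c p ≤ ((d:ℝ) + 1) * σr := by
      simp only [hc, hσr]
      push_cast [← Nat.cast_sum]
      exact_mod_cast hsumnat
    calc ∑ p ∈ A, (c p) ^ 2 ≤ ∑ p ∈ A, M * c p := by
          apply Finset.sum_le_sum
          intro p hp
          have h1 := hw p hp
          have h0 : (0:ℝ) ≤ c p := Nat.cast_nonneg _
          nlinarith
      _ = M * ∑ p ∈ A, c p := by rw [Finset.mul_sum]
      _ ≤ M * (((d:ℝ) + 1) * σr) := mul_le_mul_of_nonneg_left hcsum hM.le
      _ = W := by rw [hW]; ring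
  set l : ℝ := 4 * t / W with hl
  have hlpos : 0 < l := by positivity
  clear_value l
  clear_value W
  -- Markov step
  have markov : ∀ g : Finset (EuclideanSpace ℝ (Fin d)) → ℝ,
      (∑ T ∈ A.powerset, Real.exp (l * g T) ≤
        2 ^ A.card * Real.exp (l ^ 2 * (∑ p ∈ A, (c p) ^ 2) / 8)) →
      ((A.powerset.filter (fun T => t ≤ g T)).card : ℝ)
        ≤ 2 ^ A.card * Real.exp (-(t ^ 2) / (2 * W)) := by
    intro g hg
    have hcount : ((A.powerset.filter (fun T => t ≤ g T)).card : ℝ) * Real.exp (l * t)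
        ≤ 2 ^ A.card * Real.exp (l ^ 2 * (∑ p ∈ A, (c p) ^ 2) / 8) := by
      calc ((A.powerset.filter (fun T => t ≤ g T)).card : ℝ) * Real.exp (l * t)
          = ∑ _T ∈ A.powerset.filter (fun T => t ≤ g T), Real.exp (l * t) := by
            rw [Finset.sum_const, nsmul_eq_mul]
        _ ≤ ∑ T ∈ A.powerset.filter (fun T => t ≤ g T), Real.exp (l * g T) := by
            apply Finset.sum_le_sum
            intro T hT
            exact Real.exp_le_exp.mpr
              (mul_le_mul_of_nonneg_left (Finset.mem_filter.1 hT).2 hlpos.le)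
        _ ≤ ∑ T ∈ A.powerset, Real.exp (l * g T) :=
            Finset.sum_le_sum_of_subset_of_nonneg (Finset.filter_subset _ _)
              (fun _ _ _ => (Real.exp_pos _).le)
        _ ≤ _ := hg
    have hkey : l ^ 2 * (∑ p ∈ A, (c p) ^ 2) / 8 - l * t ≤ -(t ^ 2) / (2 * W) := by
      have h1 : l ^ 2 * (∑ p ∈ A, (c p) ^ 2) / 8 ≤ l ^ 2 * W / 8 := by
        have := mul_le_mul_of_nonneg_left hVW (sq_nonneg l)
        linarith
      have h2 : l ^ 2 * W / 8 = 2 * t ^ 2 / W := by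
        rw [hl]
        field_simp
        ring
      have h3 : l * t = 4 * t ^ 2 / W := by
        rw [hl]
        field_simp
      have h7 : t ^ 2 / (2 * W) ≤ 2 * t ^ 2 / W := by
        rw [div_le_div_iff₀ (by positivity) (by positivity)]
        nlinarith [sq_nonneg t, hWpos]
      calc l ^ 2 * (∑ p ∈ A, (c p) ^ 2) / 8 - l * t
          ≤ l ^ 2 * W / 8 - l * t := by linarith
        _ = 2 * t ^ 2 / W - 4 * t ^ 2 / W := by rw [h2, h3]
        _ = -(2 * t ^ 2 / W) := by ring
        _ ≤ -(t ^ 2 / (2 * W)) := by linarith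
        _ = -(t ^ 2) / (2 * W) := (neg_div _ _).symm
    calc ((A.powerset.filter (fun T => t ≤ g T)).card : ℝ)
        ≤ 2 ^ A.card * Real.exp (l ^ 2 * (∑ p ∈ A, (c p) ^ 2) / 8) / Real.exp (l * t) := by
          rw [le_div_iff₀ (Real.exp_pos _)]
          exact hcount
      _ = 2 ^ A.card * Real.exp (l ^ 2 * (∑ p ∈ A, (c p) ^ 2) / 8 - l * t) := by
          rw [Real.exp_sub]; ring
      _ ≤ 2 ^ A.card * Real.exp (-(t ^ 2) / (2 * W)) := by
          apply mul_le_mul_of_nonneg_left (Real.exp_le_exp.mpr hkey) (by positivity)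
  have Hpos := markov f (hoeffding_powerset l c A f hlip hmean)
  have hlipneg : ∀ p ∈ A, ∀ T ⊆ A, |(fun T => -f T) (insert p T) - (fun T => -f T) T| ≤ c p := by
    intro p hp T hT
    simp only
    rw [show -f (insert p T) - -f T = -(f (insert p T) - f T) from by ring, abs_neg]
    exact hlip p hp T hT
  have hmeanneg : ∑ T ∈ A.powerset, (fun T => -f T) T = 0 := by
    simp only
    rw [Finset.sum_neg_distrib, hmean, neg_zero]
  have Hneg := markov (fun T => -f T) (hoeffding_powerset l c A (fun T => -f T) hlipneg hmeanneg)
  -- convert the set to a finset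
  have hset : {T : Finset (EuclideanSpace ℝ (Fin d)) | T ⊆ A ∧
      t ≤ |(simplicialDepth d (L ∪ T) q : ℝ) - μ|} =
      ↑(A.powerset.filter (fun T => t ≤ |f T|)) := by
    ext T
    simp [hf, Finset.mem_powerset]
  rw [hset, Set.ncard_coe_finset]
  have hunion : A.powerset.filter (fun T => t ≤ |f T|) ⊆
      (A.powerset.filter (fun T => t ≤ f T)) ∪
        (A.powerset.filter (fun T => t ≤ -f T)) := by
    intro T hT
    rw [Finset.mem_filter] at hT
    rcases le_abs.1 hT.2 with h | h
    · exact Finset.mem_union_left _ (Finset.mem_filter.2 ⟨hT.1, h⟩)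
    · exact Finset.mem_union_right _ (Finset.mem_filter.2 ⟨hT.1, h⟩)
  have hcardle : ((A.powerset.filter (fun T => t ≤ |f T|)).card : ℝ)
      ≤ ((A.powerset.filter (fun T => t ≤ f T)).card : ℝ)
        + ((A.powerset.filter (fun T => t ≤ -f T)).card : ℝ) := by
    have := (Finset.card_le_card hunion).trans (Finset.card_union_le _ _)
    exact_mod_cast this
  have hexpeq : -(t ^ 2) / (2 * ((d:ℝ) + 1) * M * σr) = -(t ^ 2) / (2 * W) := by
    rw [hW]; ring_nf
  calc ((A.powerset.filter (fun T => t ≤ |f T|)).card : ℝ)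
      ≤ ((A.powerset.filter (fun T => t ≤ f T)).card : ℝ)
        + ((A.powerset.filter (fun T => t ≤ -f T)).card : ℝ) := hcardle
    _ ≤ 2 ^ A.card * Real.exp (-(t ^ 2) / (2 * W))
        + 2 ^ A.card * Real.exp (-(t ^ 2) / (2 * W)) := by
        apply add_le_add Hpos
        exact Hneg
    _ = 2 ^ A.card * (2 * Real.exp (-(t ^ 2) / (2 * W))) := by ring
    _ = 2 ^ A.card * (2 * Real.exp (-(t ^ 2) / (2 * ((d:ℝ) + 1) * M * σr))) := by
        rw [hexpeq]
end

section
/- Let P ⊂ ℝ² be a finite set, q ∈ ℝ² with q ∉ P, and suppose no three points of P ∪ {q} are collinear. Let h be a closed halfplane whose boundary line passes through q, let m = |P ∩ h|, and let p ∈ P ∩ h. Let ℓ be the line through p and q, and let n₁ and n₂ be the numbers of points of P lying strictly on each of the two open sides of ℓ. If n₁ ≥ m and n₂ ≥ m, then (n₁ − m)(n₂ − m) ≤ ω_{q;P}(p) ≤ n₁ · n₂. Moreover, if 0 < ε ≤ 1 and n₁, n₂ ≥ 2m/ε, then (1 − ε)·n₁·n₂ ≤ ω_{q;P}(p) ≤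 n₁·n₂, i.e., n₁n₂ is a relative (1+O(ε))-approximation of ω_{q;P}(p). -/
open scoped Classical

/-- The weight `ω_{q;P}(p)` in the plane: the number of 3-element subsets of `P`
containing `p` whose convex hull contains `q`. -/
noncomputable def weight2 (P : Finset (EuclideanSpace ℝ (Fin 2)))
    (q p : EuclideanSpace ℝ (Fin 2)) : ℕ :=
  {S : Finset (EuclideanSpace ℝ (Fin 2)) |
    S ⊆ P ∧ S.card = 3 ∧ p ∈ S ∧
      q ∈ convexHull ℝ (S : Set (EuclideanSpace ℝ (Fin 2)))}.ncard

local notation "E2" => EuclideanSpace ℝ (Fin 2)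

lemma inner2 (w u : E2) : (inner ℝ w u : ℝ) = w 0 * u 0 + w 1 * u 1 := by
  simp [PiLp.inner_apply, Fin.sum_univ_two, RCLike.inner_apply, mul_comm]

lemma ext2 {u v : E2} (h0 : u 0 = v 0) (h1 : u 1 = v 1) : u = v := by
  ext i; fin_cases i <;> assumption

lemma key2 {w u₁ u₂ : E2} (hw : w ≠ 0)
    (h1 : (inner ℝ w u₁ : ℝ) = 0) (h2 : (inner ℝ w u₂ : ℝ) = 0) (hu1 : u₁ ≠ 0) :
    ∃ r : ℝ, u₂ = r • u₁ := by
  rw [inner2] at h1 h2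
  by_cases h0 : w 0 = 0
  · have hw1 : w 1 ≠ 0 := fun h => hw (ext2 h0 h)
    rw [h0] at h1 h2
    have e1 : u₁ 1 = 0 := by
      rcases mul_eq_zero.1 (by linarith : w 1 * u₁ 1 = 0) with h | h
      exacts [absurd h hw1, h]
    have e2 : u₂ 1 = 0 := by
      rcases mul_eq_zero.1 (by linarith : w 1 * u₂ 1 = 0) with h | h
      exacts [absurd h hw1, h]
    have hu10 : u₁ 0 ≠ 0 := fun h => hu1 (ext2 h e1)
    refine ⟨u₂ 0 / u₁ 0, ext2 ?_ ?_⟩ <;>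
      simp only [PiLp.smul_apply, smul_eq_mul, e1, e2, mul_zero]
    field_simp
  · have hu11 : u₁ 1 ≠ 0 := by
      intro h
      rw [h, mul_zero, add_zero] at h1
      rcases mul_eq_zero.1 h1 with h' | h'
      exacts [absurd h' h0, hu1 (ext2 h' h)]
    refine ⟨u₂ 1 / u₁ 1, ext2 ?_ ?_⟩ <;>
      simp only [PiLp.smul_apply, smul_eq_mul]
    · have e1 : u₁ 0 = -w 1 * u₁ 1 / w 0 := by field_simp; linarith
      have e2 : u₂ 0 = -w 1 * u₂ 1 / w 0 := by field_simp; linarith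
      rw [e1, e2]; field_simp
    · field_simp


lemma not_indep {p q a : E2} (hpq : p ≠ q) (hpa : p ≠ a) (hqa : q ≠ a) {r : ℝ}
    (h : a - q = r • (p - q)) :
    ¬ AffineIndependent ℝ (fun x : ({p, q, a} : Finset E2) => (x : E2)) := by
  intro hind
  have hmem : ∀ x ∈ ({p, q, a} : Finset E2), True := fun _ _ => trivial
  let e : Fin 3 ↪ ({p, q, a} : Finset E2) :=
    ⟨![⟨p, by simp⟩, ⟨q, by simp⟩, ⟨a, by simp⟩], by
      intro i j hij
      fin_cases i <;> fin_cases j <;> simp_all [Subtype.ext_iff] ⟩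
  have h3 : AffineIndependent ℝ ((fun x : ({p, q, a} : Finset E2) => (x : E2)) ∘ e) :=
    hind.comp_embedding e
  have heq : ((fun x : ({p, q, a} : Finset E2) => (x : E2)) ∘ e) = ![p, q, a] := by
    funext i; fin_cases i <;> rfl
  rw [heq, affineIndependent_iff_not_collinear_set] at h3
  apply h3
  rw [collinear_iff_of_mem (show q ∈ ({p, q, a} : Set E2) by simp)]
  refine ⟨p - q, fun x hx => ?_⟩
  rcases hx with rfl | rfl | rfl
  · exact ⟨1, by simp⟩
  · exact ⟨0, by simp⟩
  · exact ⟨r, by rw [← h]; simp⟩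



/-- Lemma L: containment. -/
lemma containment {p q a b v w : E2} (c : ℝ) (hw : w ≠ 0) (hpq : p ≠ q)
    (hperp : (inner ℝ w (p - q) : ℝ) = 0)
    (hfa : 0 < (inner ℝ w (a - q) : ℝ)) (hfb : (inner ℝ w (b - q) : ℝ) < 0)
    (hga : c < (inner ℝ v a : ℝ)) (hgb : c < (inner ℝ v b : ℝ))
    (hgp : (inner ℝ v p : ℝ) < c) (hqc : (inner ℝ v q : ℝ) = c) :
    q ∈ convexHull ℝ ({p, a, b} : Set E2) := by
  set Fa : ℝ := inner ℝ w (a - q) with hFa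
  set Fb : ℝ := inner ℝ w (b - q) with hFb
  have hden : 0 < Fa - Fb := by linarith
  set t : ℝ := Fa / (Fa - Fb) with ht
  have ht0 : 0 < t := div_pos hfa hden
  have ht1 : t < 1 := (div_lt_one hden).mpr (by linarith)
  set z : E2 := (1 - t) • a + t • b with hzdef
  have hcomb : (1 - t) * Fa + t * Fb = 0 := by
    rw [ht]; field_simp; ring
  have hz : (inner ℝ w (z - q) : ℝ) = 0 := by
    rw [hzdef]
    have : ((1 - t) • a + t • b : E2) - q = (1 - t) • (a - q) + t • (b - q) := by module
    rw [this, inner_add_right, real_inner_smul_right, real_inner_smul_right]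
    rw [← hFa, ← hFb]; exact hcomb
  obtain ⟨s, hs⟩ := key2 hw hperp hz (sub_ne_zero.mpr hpq)
  have hgz : c < (inner ℝ v z : ℝ) := by
    rw [hzdef, inner_add_right, real_inner_smul_right, real_inner_smul_right]
    nlinarith
  have hvz : (inner ℝ v (z - q) : ℝ) = s * ((inner ℝ v p : ℝ) - c) := by
    rw [hs, real_inner_smul_right, inner_sub_right, hqc]
  have hvz' : (inner ℝ v (z - q) : ℝ) = (inner ℝ v z : ℝ) - c := by
    rw [inner_sub_right, hqc]
  have hsneg : s < 0 := by nlinarith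
  have h1s : (0:ℝ) < 1 - s := by linarith
  set μ : ℝ := 1 / (1 - s) with hμdef
  have hμ : μ * (1 - s) = 1 := by rw [hμdef]; field_simp
  have hμ0 : 0 < μ := by positivity
  have hμ1 : μ < 1 := by rw [hμdef]; rw [div_lt_one h1s]; linarith
  have hq_eq : (1 - μ) • p + μ • z = q := by
    have e1 : (1 - μ) • p + μ • z - q = (1 - μ) • (p - q) + μ • (z - q) := by module
    rw [hs] at e1
    have e2 : ((1 - μ) • (p - q) + μ • (s • (p - q)) : E2) = (1 - μ + μ * s) • (p - q) := by
      module
    have e3 : 1 - μ + μ * s = 0 := by nlinarith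
    rw [e2, e3, zero_smul] at e1
    exact sub_eq_zero.mp e1
  have hzseg : z ∈ segment ℝ a b := ⟨1 - t, t, by linarith, ht0.le, by ring, rfl⟩
  have hqseg : q ∈ segment ℝ p z := ⟨1 - μ, μ, by linarith, hμ0.le, by ring, hq_eq⟩
  have hp' : p ∈ convexHull ℝ ({p, a, b} : Set E2) := subset_convexHull ℝ _ (by simp)
  have hz' : z ∈ convexHull ℝ ({p, a, b} : Set E2) :=
    segment_subset_convexHull (by simp) (by simp) hzseg
  exact (convex_convexHull ℝ _).segment_subset hp' hz' hqseg


/-- Lemma U: if q is in the hull of {p,a,b}, then a,b are on opposite sides. -/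
lemma sides {p q a b w : E2} (hpa : p ≠ a) (hpb : p ≠ b) (hab : a ≠ b) (hqp : q ≠ p)
    (hperp : (inner ℝ w (p - q) : ℝ) = 0)
    (hfa : (inner ℝ w (a - q) : ℝ) ≠ 0) (hfb : (inner ℝ w (b - q) : ℝ) ≠ 0)
    (hq : q ∈ convexHull ℝ (({p, a, b} : Finset E2) : Set E2)) :
    (inner ℝ w (a - q) : ℝ) * (inner ℝ w (b - q) : ℝ) < 0 := by
  rw [Finset.convexHull_eq] at hq
  obtain ⟨l, hl0, hlsum, hlcm⟩ := hq
  rw [Finset.centerMass_eq_of_sum_1 _ _ hlsum] at hlcm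
  have hpab : p ∉ ({a, b} : Finset E2) := by simp [hpa, hpb]
  have hab' : a ∉ ({b} : Finset E2) := by simp [hab]
  rw [Finset.sum_insert hpab, Finset.sum_insert hab', Finset.sum_singleton] at hlcm hlsum
  simp only [id] at hlcm
  have hla : 0 ≤ l a := hl0 a (by simp)
  have hlb : 0 ≤ l b := hl0 b (by simp)
  have hinner : (inner ℝ w q : ℝ) =
      l p * (inner ℝ w p : ℝ) + l a * (inner ℝ w a : ℝ) + l b * (inner ℝ w b : ℝ) := by
    conv_lhs => rw [← hlcm]
    simp [inner_add_right, real_inner_smul_right]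
    ring
  have hwp : (inner ℝ w p : ℝ) = (inner ℝ w q : ℝ) := by
    have := hperp; rw [inner_sub_right] at this; linarith
  have hFa : (inner ℝ w (a - q) : ℝ) = (inner ℝ w a : ℝ) - (inner ℝ w q : ℝ) := by
    rw [inner_sub_right]
  have hFb : (inner ℝ w (b - q) : ℝ) = (inner ℝ w b : ℝ) - (inner ℝ w q : ℝ) := by
    rw [inner_sub_right]
  set Fa : ℝ := (inner ℝ w (a - q) : ℝ)
  set Fb : ℝ := (inner ℝ w (b - q) : ℝ)
  have hkey : l a * Fa + l b * Fb = 0 := by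
    rw [hFa, hFb]
    linear_combination -hinner - (inner ℝ w q : ℝ) * hlsum - l p * hwp
  have hla' : 0 < l a := by
    rcases hla.lt_or_eq with h | h
    · exact h
    exfalso
    have hk := hkey
    rw [← h, zero_mul, zero_add] at hk
    rcases mul_eq_zero.1 hk with h' | h'
    · apply hqp
      have hlp : l p = 1 := by linarith
      rw [← hlcm, ← h, h', hlp]; simp
    · exact hfb h'
  have hlb' : 0 < l b := by
    rcases hlb.lt_or_eq with h | h
    · exact h
    exfalso
    have hk := hkey
    rw [← h, zero_mul, add_zero] at hk
    rcases mul_eq_zero.1 hk with h' | h'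
    · exact absurd h' (ne_of_gt hla')
    · exact hfa h'
  have h5 : l a * (Fa * Fb) = -(l b) * (Fb * Fb) := by linear_combination Fb * hkey
  have hFb2 : 0 < Fb * Fb := mul_self_pos.mpr hfb
  by_contra hcon
  push_neg at hcon
  nlinarith [mul_nonneg hla'.le hcon, mul_pos hlb' hFb2]

set_option maxHeartbeats 1000000 in
/-- let `h = {x : ⟪v,x⟫ ≤ c}` be a closed halfplane whose boundary
passes through `q`, `m = |P ∩ h|`, `p ∈ P ∩ h`, and let `n₁, n₂` be the numbers of
points of `P` strictly on each open side of the line `ℓ` through `p` and `q`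
(described by a nonzero normal `w` with `⟪w, p - q⟫ = 0`). If `n₁, n₂ ≥ m`, then
`(n₁ − m)(n₂ − m) ≤ ω_{q;P}(p) ≤ n₁n₂`; moreover for `0 < ε ≤ 1`, if
`n₁, n₂ ≥ 2m/ε` then `(1−ε)n₁n₂ ≤ ω_{q;P}(p) ≤ n₁n₂`. -/
theorem weight_approx_2d (P : Finset (EuclideanSpace ℝ (Fin 2)))
    (q : EuclideanSpace ℝ (Fin 2)) (hqP : q ∉ P)
    (hgp : ∀ S : Finset (EuclideanSpace ℝ (Fin 2)),
      ↑S ⊆ (↑P ∪ {q} : Set (EuclideanSpace ℝ (Fin 2))) → S.card = 3 →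
        AffineIndependent ℝ (fun x : S => (x : EuclideanSpace ℝ (Fin 2))))
    (v : EuclideanSpace ℝ (Fin 2)) (c : ℝ) (hv : v ≠ 0)
    (hqc : (inner ℝ v q : ℝ) = c)
    (m : ℕ)
    (hm : m = {x ∈ (P : Set (EuclideanSpace ℝ (Fin 2))) | (inner ℝ v x : ℝ) ≤ c}.ncard)
    (p : EuclideanSpace ℝ (Fin 2)) (hpP : p ∈ P) (hph : (inner ℝ v p : ℝ) ≤ c)
    (w : EuclideanSpace ℝ (Fin 2)) (hw : w ≠ 0) (hperp : (inner ℝ w (p - q) : ℝ) = 0)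
    (n₁ n₂ : ℕ)
    (hn₁ : n₁ = {x ∈ (P : Set (EuclideanSpace ℝ (Fin 2))) |
      0 < (inner ℝ w (x - q) : ℝ)}.ncard)
    (hn₂ : n₂ = {x ∈ (P : Set (EuclideanSpace ℝ (Fin 2))) |
      (inner ℝ w (x - q) : ℝ) < 0}.ncard)
    (hmn₁ : m ≤ n₁) (hmn₂ : m ≤ n₂) :
    ((n₁ - m) * (n₂ - m) ≤ weight2 P q p ∧ weight2 P q p ≤ n₁ * n₂) ∧
    ∀ ε : ℝ, 0 < ε → ε ≤ 1 → 2 * m / ε ≤ (n₁ : ℝ) → 2 * m / ε ≤ (n₂ : ℝ) →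
      (1 - ε) * n₁ * n₂ ≤ (weight2 P q p : ℝ) ∧ (weight2 P q p : ℝ) ≤ n₁ * n₂ := by
  classical
  have hpq : p ≠ q := fun h => hqP (h ▸ hpP)
  have hqp : q ≠ p := hpq.symm
  have hpq0 : p - q ≠ 0 := sub_ne_zero.mpr hpq
  -- general position: no point of P other than p lies on the line pq
  have hfne : ∀ a ∈ P, a ≠ p → (inner ℝ w (a - q) : ℝ) ≠ 0 := by
    intro a haP hap h
    obtain ⟨r, hr⟩ := key2 hw hperp h hpq0
    have hqa : q ≠ a := fun h' => hqP (h' ▸ haP)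
    refine not_indep hpq (Ne.symm hap) hqa hr (hgp _ ?_ ?_)
    · intro x hx
      simp only [Finset.coe_insert, Finset.coe_singleton, Set.mem_insert_iff,
        Set.mem_singleton_iff] at hx
      rcases hx with rfl | rfl | rfl
      · exact Or.inl hpP
      · exact Or.inr rfl
      · exact Or.inl haP
    · exact Finset.card_eq_three.mpr ⟨p, q, a, hpq, Ne.symm hap, hqa, rfl⟩
  -- the collection of triangles
  set T : Finset (Finset (EuclideanSpace ℝ (Fin 2))) :=
    P.powerset.filter (fun S => S.card = 3 ∧ p ∈ S ∧
      q ∈ convexHull ℝ (S : Set (EuclideanSpace ℝ (Fin 2)))) with hT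
  have hweight : weight2 P q p = T.card := by
    rw [weight2, ← Set.ncard_coe_finset]
    congr 1
    ext S
    simp only [Set.mem_setOf_eq, hT, Finset.coe_filter, Finset.mem_powerset]
  set P₁ : Finset (EuclideanSpace ℝ (Fin 2)) :=
    P.filter (fun x => 0 < (inner ℝ w (x - q) : ℝ)) with hP₁
  set P₂ : Finset (EuclideanSpace ℝ (Fin 2)) :=
    P.filter (fun x => (inner ℝ w (x - q) : ℝ) < 0) with hP₂
  set Pm : Finset (EuclideanSpace ℝ (Fin 2)) :=
    P.filter (fun x => (inner ℝ v x : ℝ) ≤ c) with hPm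
  have hn₁' : n₁ = P₁.card := by
    rw [hn₁, ← Set.ncard_coe_finset]
    congr 1
    ext x
    simp [hP₁]
  have hn₂' : n₂ = P₂.card := by
    rw [hn₂, ← Set.ncard_coe_finset]
    congr 1
    ext x
    simp [hP₂]
  have hm' : m = Pm.card := by
    rw [hm, ← Set.ncard_coe_finset]
    congr 1
    ext x
    simp [hPm]
  -- every triangle has one vertex strictly on each side
  have hdecomp : ∀ S ∈ T, ∃ a b, a ∈ P₁ ∧ b ∈ P₂ ∧ a ≠ b ∧ a ≠ p ∧ b ≠ p ∧
      S = insert p {a, b} := by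
    intro S hS
    rw [hT, Finset.mem_filter, Finset.mem_powerset] at hS
    obtain ⟨hSP, hScard, hpS, hhull⟩ := hS
    obtain ⟨x, y, z, hxy, hxz, hyz, rfl⟩ := Finset.card_eq_three.mp hScard
    -- identify p among x, y, z and name the other two
    have hmain : ∀ a b : EuclideanSpace ℝ (Fin 2), a ≠ b → a ≠ p → b ≠ p →
        ({x, y, z} : Finset (EuclideanSpace ℝ (Fin 2))) = insert p {a, b} →
        ∃ a' b', a' ∈ P₁ ∧ b' ∈ P₂ ∧ a' ≠ b' ∧ a' ≠ p ∧ b' ≠ p ∧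
          ({x, y, z} : Finset (EuclideanSpace ℝ (Fin 2))) = insert p {a', b'} := by
      intro a b hab hap hbp hSeq
      have haP : a ∈ P := hSP (by rw [hSeq]; simp)
      have hbP : b ∈ P := hSP (by rw [hSeq]; simp)
      have hfa := hfne a haP hap
      have hfb := hfne b hbP hbp
      have hprod : (inner ℝ w (a - q) : ℝ) * (inner ℝ w (b - q) : ℝ) < 0 := by
        refine sides (Ne.symm hap) (Ne.symm hbp) hab hqp hperp hfa hfb ?_
        rw [← hSeq]; exact hhull
      rcases lt_or_gt_of_ne hfa with hneg | hpos
      · refine ⟨b, a, ?_, ?_, hab.symm, hbp, hap, ?_⟩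
        · rw [hP₁, Finset.mem_filter]
          refine ⟨hbP, ?_⟩
          nlinarith
        · rw [hP₂, Finset.mem_filter]
          exact ⟨haP, hneg⟩
        · rw [hSeq, Finset.pair_comm]
      · refine ⟨a, b, ?_, ?_, hab, hap, hbp, hSeq⟩
        · rw [hP₁, Finset.mem_filter]
          exact ⟨haP, hpos⟩
        · rw [hP₂, Finset.mem_filter]
          refine ⟨hbP, ?_⟩
          nlinarith
    rcases (by simpa using hpS : p = x ∨ p = y ∨ p = z) with rfl | rfl | rfl
    · exact hmain y z hyz (Ne.symm hxy) (Ne.symm hxz) rfl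
    · exact hmain x z hxz hxy (Ne.symm hyz) (Finset.insert_comm x p {z})
    · refine hmain x y hxy hxz hyz ?_
      rw [Finset.pair_comm y p, Finset.insert_comm x p]
  -- upper bound
  have hupper : T.card ≤ n₁ * n₂ := by
    have hTsub : T ⊆ (P₁ ×ˢ P₂).image
        (fun ab : _ × _ => insert p ({ab.1, ab.2} : Finset (EuclideanSpace ℝ (Fin 2)))) := by
      intro S hS
      obtain ⟨a, b, ha, hb, _, _, _, rfl⟩ := hdecomp S hS
      exact Finset.mem_image.mpr ⟨(a, b), Finset.mem_product.mpr ⟨ha, hb⟩, rfl⟩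
    calc T.card ≤ _ := Finset.card_le_card hTsub
      _ ≤ (P₁ ×ˢ P₂).card := Finset.card_image_le
      _ = n₁ * n₂ := by rw [Finset.card_product, hn₁', hn₂']
  -- p is strictly inside the halfplane
  have hfp : (inner ℝ w (p - q) : ℝ) = 0 := hperp
  have hgpc : (inner ℝ v p : ℝ) < c := by
    rcases hph.lt_or_eq with h | h
    · exact h
    exfalso
    have hvpq : (inner ℝ (p - q) v : ℝ) = 0 := by
      rw [real_inner_comm, inner_sub_right, h, hqc, sub_self]
    have hwpq : (inner ℝ (p - q) w : ℝ) = 0 := by rw [real_inner_comm]; exact hperp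
    obtain ⟨k, hk⟩ := key2 hpq0 hwpq hvpq hw
    have hk0 : k ≠ 0 := by
      rintro rfl
      rw [zero_smul] at hk
      exact hv hk
    have hgf : ∀ x : EuclideanSpace ℝ (Fin 2),
        (inner ℝ v x : ℝ) - c = k * (inner ℝ w (x - q) : ℝ) := by
      intro x
      have h1 : (inner ℝ v (x - q) : ℝ) = k * (inner ℝ w (x - q) : ℝ) := by
        rw [hk, real_inner_smul_left]
      rw [inner_sub_right, hqc] at h1
      linarith
    have hpP₁ : p ∉ P₁ := by
      rw [hP₁, Finset.mem_filter]
      rintro ⟨-, h'⟩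
      rw [hfp] at h'
      exact lt_irrefl 0 h'
    have hpP₂ : p ∉ P₂ := by
      rw [hP₂, Finset.mem_filter]
      rintro ⟨-, h'⟩
      rw [hfp] at h'
      exact lt_irrefl 0 h'
    rcases lt_or_gt_of_ne hk0 with hkneg | hkpos
    · -- k < 0 : points with f > 0 satisfy g < c
      have hsub : insert p P₁ ⊆ Pm := by
        intro x hx
        rcases Finset.mem_insert.mp hx with rfl | hx
        · rw [hPm, Finset.mem_filter]; exact ⟨hpP, hph⟩
        · rw [hP₁, Finset.mem_filter] at hx
          rw [hPm, Finset.mem_filter]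
          refine ⟨hx.1, ?_⟩
          have := hgf x
          nlinarith [hx.2]
      have := Finset.card_le_card hsub
      rw [Finset.card_insert_of_notMem hpP₁] at this
      omega
    · -- k > 0 : points with f < 0 satisfy g < c
      have hsub : insert p P₂ ⊆ Pm := by
        intro x hx
        rcases Finset.mem_insert.mp hx with rfl | hx
        · rw [hPm, Finset.mem_filter]; exact ⟨hpP, hph⟩
        · rw [hP₂, Finset.mem_filter] at hx
          rw [hPm, Finset.mem_filter]
          refine ⟨hx.1, ?_⟩
          have := hgf x
          nlinarith [hx.2]
      have := Finset.card_le_card hsub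
      rw [Finset.card_insert_of_notMem hpP₂] at this
      omega
  -- lower bound
  have hlower : (n₁ - m) * (n₂ - m) ≤ T.card := by
    set A : Finset (EuclideanSpace ℝ (Fin 2)) := P₁ \ Pm with hA
    set B : Finset (EuclideanSpace ℝ (Fin 2)) := P₂ \ Pm with hB
    have hAprop : ∀ a ∈ A, a ∈ P ∧ 0 < (inner ℝ w (a - q) : ℝ) ∧ c < (inner ℝ v a : ℝ) := by
      intro a ha
      rw [hA, Finset.mem_sdiff, hP₁, Finset.mem_filter, hPm, Finset.mem_filter] at ha
      refine ⟨ha.1.1, ha.1.2, ?_⟩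
      by_contra h
      exact ha.2 ⟨ha.1.1, le_of_not_gt h⟩
    have hBprop : ∀ b ∈ B, b ∈ P ∧ (inner ℝ w (b - q) : ℝ) < 0 ∧ c < (inner ℝ v b : ℝ) := by
      intro b hb
      rw [hB, Finset.mem_sdiff, hP₂, Finset.mem_filter, hPm, Finset.mem_filter] at hb
      refine ⟨hb.1.1, hb.1.2, ?_⟩
      by_contra h
      exact hb.2 ⟨hb.1.1, le_of_not_gt h⟩
    have hinj : ((A ×ˢ B).card ≤ T.card) := by
      apply Finset.card_le_card_of_injOn
        (fun ab : _ × _ => insert p ({ab.1, ab.2} : Finset (EuclideanSpace ℝ (Fin 2))))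
      · rintro ⟨a, b⟩ hab
        rw [Finset.coe_product, Set.mem_prod, Finset.mem_coe, Finset.mem_coe] at hab
        rw [Finset.mem_coe]
        obtain ⟨haP, hfa, hga⟩ := hAprop a hab.1
        obtain ⟨hbP, hfb, hgb⟩ := hBprop b hab.2
        have hap : a ≠ p := by
          intro h'
          rw [h', hfp] at hfa
          exact lt_irrefl 0 hfa
        have hbp : b ≠ p := by
          intro h'
          rw [h', hfp] at hfb
          exact lt_irrefl 0 hfb
        have hab' : a ≠ b := by
          intro h'
          rw [h'] at hfa
          exact lt_asymm hfa hfb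
        rw [hT, Finset.mem_filter, Finset.mem_powerset]
        refine ⟨?_, ?_, by simp, ?_⟩
        · intro x hx
          rcases Finset.mem_insert.mp hx with rfl | hx
          · exact hpP
          rcases Finset.mem_insert.mp hx with rfl | hx
          · exact haP
          rw [Finset.mem_singleton] at hx
          rw [hx]; exact hbP
        · exact Finset.card_eq_three.mpr ⟨p, a, b, Ne.symm hap, Ne.symm hbp, hab', rfl⟩
        · have := containment c hw hpq hperp hfa hfb hga hgb hgpc hqc
          simpa using this
      · rintro ⟨a, b⟩ hab ⟨a', b'⟩ hab' heq
        simp only [Finset.coe_product, Set.mem_prod, Finset.mem_coe] at hab hab'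
        obtain ⟨haP, hfa, -⟩ := hAprop a hab.1
        obtain ⟨hbP, hfb, -⟩ := hBprop b hab.2
        obtain ⟨haP', hfa', -⟩ := hAprop a' hab'.1
        obtain ⟨hbP', hfb', -⟩ := hBprop b' hab'.2
        simp only at heq
        have hamem : a ∈ insert p ({a', b'} : Finset (EuclideanSpace ℝ (Fin 2))) := by
          rw [← heq]; simp
        have hbmem : b ∈ insert p ({a', b'} : Finset (EuclideanSpace ℝ (Fin 2))) := by
          rw [← heq]; simp
        have ha' : a = a' := by
          rcases Finset.mem_insert.mp hamem with h | h
          · exfalso; rw [h, hfp] at hfa; exact lt_irrefl 0 hfa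
          rcases Finset.mem_insert.mp h with h | h
          · exact h
          · exfalso
            rw [Finset.mem_singleton] at h
            rw [h] at hfa
            exact lt_asymm hfa hfb'
        have hb' : b = b' := by
          rcases Finset.mem_insert.mp hbmem with h | h
          · exfalso; rw [h, hfp] at hfb; exact lt_irrefl 0 hfb
          rcases Finset.mem_insert.mp h with h | h
          · exfalso
            rw [h] at hfb
            exact lt_asymm hfb hfa'
          · exact Finset.mem_singleton.mp h
        exact Prod.ext ha' hb'
    have hAcard : n₁ - m ≤ A.card := by
      rw [hn₁', hm']
      exact Finset.le_card_sdiff Pm P₁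
    have hBcard : n₂ - m ≤ B.card := by
      rw [hn₂', hm']
      exact Finset.le_card_sdiff Pm P₂
    calc (n₁ - m) * (n₂ - m) ≤ A.card * B.card := Nat.mul_le_mul hAcard hBcard
      _ = (A ×ˢ B).card := (Finset.card_product A B).symm
      _ ≤ T.card := hinj
  rw [hweight] at *
  refine ⟨⟨hlower, hupper⟩, ?_⟩
  intro ε hε0 hε1 h1 h2
  have hml₁ : 2 * (m : ℝ) ≤ ε * n₁ := by
    rw [div_le_iff₀ hε0] at h1
    linarith
  have hml₂ : 2 * (m : ℝ) ≤ ε * n₂ := by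
    rw [div_le_iff₀ hε0] at h2
    linarith
  constructor
  · have hcast : ((n₁ : ℝ) - m) * ((n₂ : ℝ) - m) ≤ (T.card : ℝ) := by
      have := hlower
      have h' : (((n₁ - m) * (n₂ - m) : ℕ) : ℝ) ≤ (T.card : ℝ) := by exact_mod_cast this
      rwa [Nat.cast_mul, Nat.cast_sub hmn₁, Nat.cast_sub hmn₂] at h'
    have hm0 : (0:ℝ) ≤ m := Nat.cast_nonneg m
    have hn₁0 : (0:ℝ) ≤ n₁ := Nat.cast_nonneg n₁
    have hn₂0 : (0:ℝ) ≤ n₂ := Nat.cast_nonneg n₂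
    nlinarith [mul_le_mul_of_nonneg_right hml₁ hn₂0, mul_le_mul_of_nonneg_right hml₂ hn₁0,
      sq_nonneg ((m : ℝ))]
  · exact_mod_cast hupper
end

section
/- Let d ≥ 1 and let P ⊂ ℝ^d be a finite set of n points. Define P̃ = {(p, 1) : p ∈ P} ⊂ ℝ^{d+1}, let e denote the (d+1)-st standard basis vector of ℝ^{d+1}, and let Q = P̃ ∪ {−e, −2e} (so |Q| = n + 2). Let k_d be the number of d-element subsets P' ⊆ P with 0 ∈ convexHull(P'). Then σ_Q(0) = 2·σ_P(0) + k_d, where σ_Q(0) counts the (d+2)-element subsets of Q ⊂ ℝ^{d+1} containing the origin in their convex hull and σ_P(0) counts the (d+1)-element subsets of P ⊂ ℝ^d containing the origin in their convex hull. In particular, k_d = σ_Q(0) − 2σ_P(0), so the d-Carathéodory problem for P (deciding whether some d-element subset of P contains 0 in its convex hull) reduces to two simplicial depth computations. -/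
open scoped Classical

/-- The lift `ℝ^d → ℝ^{d+1}` appending a last coordinate equal to `1`. -/
noncomputable def liftOne (d : ℕ) (p : EuclideanSpace ℝ (Fin d)) :
    EuclideanSpace ℝ (Fin (d + 1)) :=
  (EuclideanSpace.equiv (Fin (d + 1)) ℝ).symm
    (Fin.snoc (EuclideanSpace.equiv (Fin d) ℝ p) 1)

namespace SDAux

variable {d : ℕ}

lemma esum_apply {m : ℕ} {ι : Type*} (S : Finset ι) (f : ι → EuclideanSpace ℝ (Fin m)) (i : Fin m) :
    (∑ x ∈ S, f x) i = ∑ x ∈ S, f x i :=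
  map_sum (EuclideanSpace.projₗ (𝕜 := ℝ) i) f S

lemma eval_eq {m : ℕ} {x y : EuclideanSpace ℝ (Fin m)} (h : x = y) (i : Fin m) : x i = y i := by
  rw [h]

lemma liftOne_last (p : EuclideanSpace ℝ (Fin d)) : liftOne d p (Fin.last d) = 1 := by
  simp [liftOne]

lemma liftOne_castSucc (p : EuclideanSpace ℝ (Fin d)) (i : Fin d) :
    liftOne d p i.castSucc = p i := by
  simp [liftOne]

lemma liftOne_injective : Function.Injective (liftOne d) := by
  intro p q h
  ext i
  have := eval_eq h i.castSucc
  simpa [liftOne_castSucc] using this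

/-- the special vertical point -/
noncomputable def ee (d : ℕ) : EuclideanSpace ℝ (Fin (d + 1)) :=
  EuclideanSpace.single (Fin.last d) (1 : ℝ)

lemma ee_last : ee d (Fin.last d) = 1 := by simp [ee, EuclideanSpace.single_apply]

lemma ee_castSucc (i : Fin d) : ee d i.castSucc = 0 := by
  simp [ee, EuclideanSpace.single_apply, (Fin.castSucc_lt_last i).ne]

noncomputable def pr (d : ℕ) : Finset (EuclideanSpace ℝ (Fin (d + 1))) :=
  {-ee d, -((2 : ℝ) • ee d)}

lemma mem_pr_cases {x : EuclideanSpace ℝ (Fin (d+1))} (hx : x ∈ pr d) :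
    x = -ee d ∨ x = -((2:ℝ) • ee d) := by
  simpa [pr] using hx

lemma pr_last {x : EuclideanSpace ℝ (Fin (d+1))} (hx : x ∈ pr d) :
    x (Fin.last d) < 0 := by
  rcases mem_pr_cases hx with rfl | rfl <;>
    simp [PiLp.neg_apply, PiLp.smul_apply, ee_last]

lemma pr_castSucc {x : EuclideanSpace ℝ (Fin (d+1))} (hx : x ∈ pr d) (i : Fin d) :
    x i.castSucc = 0 := by
  rcases mem_pr_cases hx with rfl | rfl <;>
    simp [PiLp.neg_apply, PiLp.smul_apply, ee_castSucc]

lemma liftOne_ne_of_pr {x : EuclideanSpace ℝ (Fin (d+1))} (hx : x ∈ pr d)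
    (p : EuclideanSpace ℝ (Fin d)) : liftOne d p ≠ x := by
  intro h
  have h1 := liftOne_last p
  rw [h] at h1
  have := pr_last hx
  linarith

lemma ne_ee2 : -ee d ≠ -((2:ℝ) • ee d) := by
  intro h
  have := eval_eq h (Fin.last d)
  simp [PiLp.neg_apply, PiLp.smul_apply, ee_last] at this


/-- If every point of `S` has last coordinate `1`, then `0` is not in the hull. -/
lemma zero_notin_hull (S : Finset (EuclideanSpace ℝ (Fin (d+1))))
    (h1 : ∀ x ∈ S, x (Fin.last d) = 1) :
    (0 : EuclideanSpace ℝ (Fin (d+1))) ∉ convexHull ℝ (S : Set (EuclideanSpace ℝ (Fin (d+1)))) := by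
  intro h
  rw [Finset.convexHull_eq] at h
  obtain ⟨w, hw0, hw1, hc⟩ := h
  rw [Finset.centerMass_eq_of_sum_1 _ _ hw1] at hc
  have hL := eval_eq hc (Fin.last d)
  rw [esum_apply] at hL
  simp only [id_eq, PiLp.smul_apply, smul_eq_mul, PiLp.zero_apply] at hL
  rw [Finset.sum_congr rfl (fun x hx => by rw [h1 x hx, mul_one])] at hL
  rw [hw1] at hL
  exact one_ne_zero hL

/-- Forward direction: extracting a hull membership downstairs. -/
lemma forward (T : Finset (EuclideanSpace ℝ (Fin d))) (Ex : Finset (EuclideanSpace ℝ (Fin (d+1))))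
    (hE : Ex ⊆ pr d)
    (h : (0 : EuclideanSpace ℝ (Fin (d+1))) ∈
      convexHull ℝ ((T.image (liftOne d) ∪ Ex : Finset _) : Set (EuclideanSpace ℝ (Fin (d+1))))) :
    (0 : EuclideanSpace ℝ (Fin d)) ∈ convexHull ℝ (T : Set (EuclideanSpace ℝ (Fin d))) := by
  rw [Finset.convexHull_eq] at h
  obtain ⟨w, hw0, hw1, hc⟩ := h
  rw [Finset.centerMass_eq_of_sum_1 _ _ hw1] at hc
  simp only [id_eq] at hc
  have hdisj : Disjoint (T.image (liftOne d)) Ex := by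
    rw [Finset.disjoint_left]
    rintro x hx hxE
    obtain ⟨p, _, rfl⟩ := Finset.mem_image.1 hx
    exact liftOne_ne_of_pr (hE hxE) p rfl
  have hinj : ∀ x ∈ T, ∀ y ∈ T, liftOne d x = liftOne d y → x = y :=
    fun x _ y _ h => liftOne_injective h
  rw [Finset.sum_union hdisj, Finset.sum_image hinj] at hw1 hc
  have hw0T : ∀ p ∈ T, 0 ≤ w (liftOne d p) := fun p hp =>
    hw0 _ (Finset.mem_union_left _ (Finset.mem_image_of_mem _ hp))
  have hw0E : ∀ x ∈ Ex, 0 ≤ w x := fun x hx => hw0 _ (Finset.mem_union_right _ hx)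
  -- last coordinate
  have hL := eval_eq hc (Fin.last d)
  rw [PiLp.add_apply, esum_apply, esum_apply] at hL
  simp only [PiLp.smul_apply, smul_eq_mul, liftOne_last, mul_one, PiLp.zero_apply] at hL
  -- A > 0
  have hEneg : ∀ x ∈ Ex, w x * x (Fin.last d) ≤ 0 := fun x hx =>
    mul_nonpos_of_nonneg_of_nonpos (hw0E x hx) (pr_last (hE hx)).le
  have hApos : 0 < ∑ p ∈ T, w (liftOne d p) := by
    rcases (Finset.sum_nonneg hw0T).lt_or_eq with h | h
    · exact h
    · exfalso
      have hsum0 : ∑ x ∈ Ex, w x * x (Fin.last d) = 0 := by linarith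
      have hwE0 : ∀ x ∈ Ex, w x = 0 := by
        intro x hx
        have := (Finset.sum_eq_zero_iff_of_nonpos hEneg).1 hsum0 x hx
        rcases mul_eq_zero.1 this with h' | h'
        · exact h'
        · exact absurd h' (ne_of_lt (pr_last (hE hx)))
      have hz : ∑ x ∈ Ex, w x = 0 := Finset.sum_eq_zero hwE0
      linarith
  -- coordinates
  have key : ∑ p ∈ T, w (liftOne d p) • p = (0 : EuclideanSpace ℝ (Fin d)) := by
    ext i
    have hci := eval_eq hc i.castSucc
    rw [PiLp.add_apply, esum_apply, esum_apply] at hci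
    simp only [PiLp.smul_apply, smul_eq_mul, liftOne_castSucc, PiLp.zero_apply] at hci
    have hz : ∑ x ∈ Ex, w x * x i.castSucc = 0 :=
      Finset.sum_eq_zero (fun x hx => by rw [pr_castSucc (hE hx) i, mul_zero])
    rw [hz, add_zero] at hci
    rw [esum_apply]
    simpa [PiLp.smul_apply, PiLp.zero_apply] using hci
  have hmem := T.centerMass_mem_convexHull (w := fun p => w (liftOne d p)) (z := id)
    hw0T hApos (fun i hi => Finset.mem_coe.2 hi)
  have h0 : T.centerMass (fun p => w (liftOne d p)) id = 0 := by
    rw [Finset.centerMass]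
    simp only [id_eq]
    rw [key, smul_zero]
  rwa [h0] at hmem

/-- Backward direction. -/
lemma backward (T : Finset (EuclideanSpace ℝ (Fin d))) (S' : Finset (EuclideanSpace ℝ (Fin (d+1))))
    (hsub : T.image (liftOne d) ⊆ S') (c : ℝ) (hc : 0 < c)
    (hmem : -(c • ee d) ∈ S')
    (h : (0 : EuclideanSpace ℝ (Fin d)) ∈ convexHull ℝ (T : Set (EuclideanSpace ℝ (Fin d)))) :
    (0 : EuclideanSpace ℝ (Fin (d+1))) ∈
      convexHull ℝ (S' : Set (EuclideanSpace ℝ (Fin (d+1)))) := by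
  rw [Finset.convexHull_eq] at h
  obtain ⟨w, hw0, hw1, hcm⟩ := h
  rw [Finset.centerMass_eq_of_sum_1 _ _ hw1] at hcm
  simp only [id_eq] at hcm
  have heS : ee d ∈ convexHull ℝ (S' : Set (EuclideanSpace ℝ (Fin (d+1)))) := by
    have hmem2 := T.centerMass_mem_convexHull (w := w) (z := liftOne d)
      hw0 (hw1 ▸ one_pos) (fun i hi => Finset.mem_coe.2 (hsub (Finset.mem_image_of_mem _ hi)))
    have hval : T.centerMass w (liftOne d) = ee d := by
      rw [Finset.centerMass_eq_of_sum_1 _ _ hw1]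
      ext i
      rw [esum_apply]
      refine Fin.lastCases ?_ ?_ i
      · simp only [PiLp.smul_apply, smul_eq_mul, liftOne_last, mul_one, ee_last]
        exact hw1
      · intro j
        simp only [PiLp.smul_apply, smul_eq_mul, liftOne_castSucc, ee_castSucc]
        have := eval_eq hcm j
        rw [esum_apply] at this
        simpa [PiLp.smul_apply, PiLp.zero_apply] using this
    rwa [hval] at hmem2
  have hceS : -(c • ee d) ∈ convexHull ℝ (S' : Set (EuclideanSpace ℝ (Fin (d+1)))) :=
    subset_convexHull ℝ _ hmem
  have hconv := convex_convexHull ℝ ((S' : Finset _) : Set (EuclideanSpace ℝ (Fin (d+1))))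
  have h1c : (0:ℝ) < 1 + c := by linarith
  have ha : (0:ℝ) ≤ c / (1 + c) := by positivity
  have hb : (0:ℝ) ≤ 1 / (1 + c) := by positivity
  have hab : c / (1 + c) + 1 / (1 + c) = 1 := by
    rw [← add_div, add_comm c 1, div_self h1c.ne']
  have hcomb := hconv heS hceS ha hb hab
  have : (c / (1 + c)) • ee d + (1 / (1 + c)) • -(c • ee d) = (0 : EuclideanSpace ℝ (Fin (d+1))) := by
    rw [smul_neg, smul_smul]
    have h2 : (1 / (1 + c)) * c = c / (1 + c) := by ring
    rw [h2, add_neg_cancel]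
  rwa [this] at hcomb


lemma image_preimage_liftOne {W : Finset (EuclideanSpace ℝ (Fin (d+1)))}
    {P : Finset (EuclideanSpace ℝ (Fin d))} (h : W ⊆ P.image (liftOne d)) :
    (W.preimage (liftOne d) liftOne_injective.injOn).image (liftOne d) = W := by
  rw [Finset.image_preimage]
  refine Finset.filter_true_of_mem fun x hx => ?_
  obtain ⟨p, _, rfl⟩ := Finset.mem_image.1 (h hx)
  exact ⟨p, rfl⟩

lemma preimage_image_liftOne (T : Finset (EuclideanSpace ℝ (Fin d))) :
    (T.image (liftOne d)).preimage (liftOne d) liftOne_injective.injOn = T := by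
  ext t
  rw [Finset.mem_preimage, Finset.mem_image]
  constructor
  · rintro ⟨p, hp, hpt⟩
    rwa [← liftOne_injective hpt]
  · exact fun ht => ⟨t, ht, rfl⟩

lemma card_slice (P : Finset (EuclideanSpace ℝ (Fin d)))
    (X : Finset (EuclideanSpace ℝ (Fin (d+1))))
    (hX : X ⊆ pr d) (hXne : X.Nonempty) (k : ℕ) (hk : X.card + k = d + 1 + 1) :
    (((P.image (liftOne d) ∪ pr d).powerset.filter
        (fun (S : Finset (EuclideanSpace ℝ (Fin (d+1)))) => S.card = d + 1 + 1 ∧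
          (0 : EuclideanSpace ℝ (Fin (d+1))) ∈
          convexHull ℝ (S : Set (EuclideanSpace ℝ (Fin (d+1)))))).filter
        (fun S => ∀ y ∈ pr d, (y ∈ S ↔ y ∈ X))).card
      = (P.powerset.filter (fun (T : Finset (EuclideanSpace ℝ (Fin d))) => T.card = k ∧
          (0 : EuclideanSpace ℝ (Fin d)) ∈
          convexHull ℝ (T : Set (EuclideanSpace ℝ (Fin d))))).card := by
  refine Finset.card_nbij'
    (fun (S : Finset (EuclideanSpace ℝ (Fin (d+1)))) =>
      (S \ X).preimage (liftOne d) liftOne_injective.injOn)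
    (fun (T : Finset (EuclideanSpace ℝ (Fin d))) => T.image (liftOne d) ∪ X) ?_ ?_ ?_ ?_
  · -- i maps into t
    intro S hS
    simp only [Finset.mem_coe, Finset.mem_filter, Finset.mem_powerset] at hS
    obtain ⟨⟨hSQ, hcard, hconv⟩, hpat⟩ := hS
    have hXS : X ⊆ S := fun y hy => (hpat y (hX hy)).2 hy
    have hSsub : S \ X ⊆ P.image (liftOne d) := by
      intro x hx
      obtain ⟨hxS, hxX⟩ := Finset.mem_sdiff.1 hx
      rcases Finset.mem_union.1 (hSQ hxS) with h | h
      · exact h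
      · exact absurd ((hpat x h).1 hxS) hxX
    have himg := image_preimage_liftOne hSsub
    have hXle : X.card ≤ S.card := Finset.card_le_card hXS
    simp only [Finset.mem_coe, Finset.mem_filter, Finset.mem_powerset]
    refine ⟨?_, ?_, ?_⟩
    · intro t ht
      have := Finset.mem_preimage.1 ht
      obtain ⟨p, hp, hpe⟩ := Finset.mem_image.1 (hSsub this)
      rwa [← liftOne_injective hpe]
    · have h1 : ((S \ X).preimage (liftOne d) liftOne_injective.injOn).card = (S \ X).card := by
        have h2 := congrArg Finset.card himg
        rwa [Finset.card_image_of_injective _ liftOne_injective] at h2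
      rw [h1, Finset.card_sdiff_of_subset hXS, hcard]
      omega
    · refine forward _ X hX ?_
      rwa [himg, Finset.sdiff_union_of_subset hXS]
  · -- j maps into s
    intro T hT
    simp only [Finset.mem_coe, Finset.mem_filter, Finset.mem_powerset] at hT
    obtain ⟨hTP, hcard, hconv⟩ := hT
    have hdisj : Disjoint (T.image (liftOne d)) X := by
      rw [Finset.disjoint_left]
      rintro x hx hxX
      obtain ⟨p, _, rfl⟩ := Finset.mem_image.1 hx
      exact liftOne_ne_of_pr (hX hxX) p rfl
    simp only [Finset.mem_coe, Finset.mem_filter, Finset.mem_powerset]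
    refine ⟨⟨?_, ?_, ?_⟩, ?_⟩
    · exact Finset.union_subset_union (Finset.image_subset_image hTP) hX
    · rw [Finset.card_union_of_disjoint hdisj,
        Finset.card_image_of_injective _ liftOne_injective, hcard]
      omega
    · obtain ⟨y, hy⟩ := hXne
      rcases mem_pr_cases (hX hy) with rfl | rfl
      · refine backward T _ Finset.subset_union_left 1 one_pos ?_ hconv
        rw [one_smul]
        exact Finset.mem_union_right _ hy
      · exact backward T _ Finset.subset_union_left 2 two_pos
          (Finset.mem_union_right _ hy) hconv
    · intro y hy
      constructor
      · intro h
        rcases Finset.mem_union.1 h with h | h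
        · obtain ⟨p, _, rfl⟩ := Finset.mem_image.1 h
          exact absurd rfl (liftOne_ne_of_pr hy p)
        · exact h
      · exact fun h => Finset.mem_union_right _ h
  · -- left inverse
    intro S hS
    simp only [Finset.mem_coe, Finset.mem_filter, Finset.mem_powerset] at hS
    obtain ⟨⟨hSQ, hcard, hconv⟩, hpat⟩ := hS
    have hXS : X ⊆ S := fun y hy => (hpat y (hX hy)).2 hy
    have hSsub : S \ X ⊆ P.image (liftOne d) := by
      intro x hx
      obtain ⟨hxS, hxX⟩ := Finset.mem_sdiff.1 hx
      rcases Finset.mem_union.1 (hSQ hxS) with h | h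
      · exact h
      · exact absurd ((hpat x h).1 hxS) hxX
    simp only [image_preimage_liftOne hSsub, Finset.sdiff_union_of_subset hXS]
  · -- right inverse
    intro T hT
    simp only [Finset.mem_coe, Finset.mem_filter, Finset.mem_powerset] at hT
    have hdisj : Disjoint (T.image (liftOne d)) X := by
      rw [Finset.disjoint_left]
      rintro x hx hxX
      obtain ⟨p, _, rfl⟩ := Finset.mem_image.1 hx
      exact liftOne_ne_of_pr (hX hxX) p rfl
    simp only [Finset.union_sdiff_cancel_right hdisj, preimage_image_liftOne]


lemma cell_empty (P : Finset (EuclideanSpace ℝ (Fin d))) :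
    (((P.image (liftOne d) ∪ pr d).powerset.filter
        (fun (S : Finset (EuclideanSpace ℝ (Fin (d+1)))) => S.card = d + 1 + 1 ∧
          (0 : EuclideanSpace ℝ (Fin (d+1))) ∈
          convexHull ℝ (S : Set (EuclideanSpace ℝ (Fin (d+1)))))).filter
        (fun S => ¬(-ee d ∈ S) ∧ ¬(-((2:ℝ) • ee d) ∈ S))) = ∅ := by
  rw [Finset.eq_empty_iff_forall_notMem]
  intro S hS
  simp only [Finset.mem_filter, Finset.mem_powerset] at hS
  obtain ⟨⟨hSQ, hcard, hconv⟩, h1, h2⟩ := hS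
  refine zero_notin_hull S (fun x hx => ?_) hconv
  rcases Finset.mem_union.1 (hSQ hx) with h | h
  · obtain ⟨p, _, rfl⟩ := Finset.mem_image.1 h
    exact liftOne_last p
  · rcases mem_pr_cases h with rfl | rfl
    · exact absurd hx h1
    · exact absurd hx h2

lemma ee_mem_pr : -ee d ∈ pr d := Finset.mem_insert_self _ _
lemma ee2_mem_pr : -((2:ℝ) • ee d) ∈ pr d :=
  Finset.mem_insert_of_mem (Finset.mem_singleton_self _)

lemma pr_card : (pr d).card = 2 := by
  rw [pr, Finset.card_insert_of_notMem (Finset.notMem_singleton.2 ne_ee2),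
    Finset.card_singleton]

set_option maxHeartbeats 1000000 in
lemma main_count (P : Finset (EuclideanSpace ℝ (Fin d))) :
    ((P.image (liftOne d) ∪ pr d).powerset.filter
        (fun (S : Finset (EuclideanSpace ℝ (Fin (d+1)))) => S.card = d + 1 + 1 ∧
          (0 : EuclideanSpace ℝ (Fin (d+1))) ∈
          convexHull ℝ (S : Set (EuclideanSpace ℝ (Fin (d+1)))))).card
      = 2 * (P.powerset.filter (fun (T : Finset (EuclideanSpace ℝ (Fin d))) =>
            T.card = d + 1 ∧ (0 : EuclideanSpace ℝ (Fin d)) ∈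
            convexHull ℝ (T : Set (EuclideanSpace ℝ (Fin d))))).card
        + (P.powerset.filter (fun (T : Finset (EuclideanSpace ℝ (Fin d))) =>
            T.card = d ∧ (0 : EuclideanSpace ℝ (Fin d)) ∈
            convexHull ℝ (T : Set (EuclideanSpace ℝ (Fin d))))).card := by
  set 𝒜 := (P.image (liftOne d) ∪ pr d).powerset.filter
      (fun (S : Finset (EuclideanSpace ℝ (Fin (d+1)))) => S.card = d + 1 + 1 ∧
        (0 : EuclideanSpace ℝ (Fin (d+1))) ∈
        convexHull ℝ (S : Set (EuclideanSpace ℝ (Fin (d+1))))) with h𝒜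
  have e1 := Finset.card_filter_add_card_filter_not (s := 𝒜)
    (fun S => -ee d ∈ S)
  have e2 := Finset.card_filter_add_card_filter_not
    (s := 𝒜.filter (fun S => -ee d ∈ S)) (fun S => -((2:ℝ) • ee d) ∈ S)
  have e3 := Finset.card_filter_add_card_filter_not
    (s := 𝒜.filter (fun S => ¬(-ee d ∈ S))) (fun S => -((2:ℝ) • ee d) ∈ S)
  -- cell (both): pattern X = pr d
  have c11 : ((𝒜.filter (fun S => -ee d ∈ S)).filter (fun S => -((2:ℝ) • ee d) ∈ S)).card
      = (P.powerset.filter (fun (T : Finset (EuclideanSpace ℝ (Fin d))) =>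
          T.card = d ∧ (0 : EuclideanSpace ℝ (Fin d)) ∈
          convexHull ℝ (T : Set (EuclideanSpace ℝ (Fin d))))).card := by
    rw [Finset.filter_filter]
    rw [Finset.filter_congr (q := fun S => ∀ y ∈ pr d, (y ∈ S ↔ y ∈ pr d))
      (fun S _ => by
        constructor
        · rintro ⟨h1, h2⟩ y hy
          refine ⟨fun _ => hy, fun _ => ?_⟩
          rcases mem_pr_cases hy with rfl | rfl
          · exact h1
          · exact h2
        · intro h
          exact ⟨(h _ ee_mem_pr).2 ee_mem_pr, (h _ ee2_mem_pr).2 ee2_mem_pr⟩)]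
    rw [h𝒜]
    convert card_slice P (pr d) Finset.Subset.rfl ⟨_, ee_mem_pr⟩ d (by rw [pr_card]; omega)
  -- cell (-e only): X = {-ee d}
  have c10 : ((𝒜.filter (fun S => -ee d ∈ S)).filter (fun S => ¬(-((2:ℝ) • ee d) ∈ S))).card
      = (P.powerset.filter (fun (T : Finset (EuclideanSpace ℝ (Fin d))) =>
          T.card = d + 1 ∧ (0 : EuclideanSpace ℝ (Fin d)) ∈
          convexHull ℝ (T : Set (EuclideanSpace ℝ (Fin d))))).card := by
    rw [Finset.filter_filter]
    rw [Finset.filter_congr (q := fun S => ∀ y ∈ pr d,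
        (y ∈ S ↔ y ∈ ({-ee d} : Finset (EuclideanSpace ℝ (Fin (d+1))))))
      (fun S _ => by
        constructor
        · rintro ⟨h1, h2⟩ y hy
          rcases mem_pr_cases hy with rfl | rfl
          · exact ⟨fun _ => Finset.mem_singleton_self _, fun _ => h1⟩
          · exact ⟨fun h => absurd h h2,
              fun h => absurd (Finset.mem_singleton.1 h).symm ne_ee2⟩
        · intro h
          refine ⟨(h _ ee_mem_pr).2 (Finset.mem_singleton_self _), fun hm => ?_⟩
          exact ne_ee2 (Finset.mem_singleton.1 ((h _ ee2_mem_pr).1 hm)).symm)]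
    rw [h𝒜]
    convert card_slice P {-ee d} (Finset.singleton_subset_iff.2 ee_mem_pr)
      ⟨_, Finset.mem_singleton_self _⟩ (d + 1) (by rw [Finset.card_singleton]; omega)
  -- cell (-2e only): X = {-2ee d}
  have c01 : ((𝒜.filter (fun S => ¬(-ee d ∈ S))).filter (fun S => -((2:ℝ) • ee d) ∈ S)).card
      = (P.powerset.filter (fun (T : Finset (EuclideanSpace ℝ (Fin d))) =>
          T.card = d + 1 ∧ (0 : EuclideanSpace ℝ (Fin d)) ∈
          convexHull ℝ (T : Set (EuclideanSpace ℝ (Fin d))))).card := by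
    rw [Finset.filter_filter]
    rw [Finset.filter_congr (q := fun S => ∀ y ∈ pr d,
        (y ∈ S ↔ y ∈ ({-((2:ℝ) • ee d)} : Finset (EuclideanSpace ℝ (Fin (d+1))))))
      (fun S _ => by
        constructor
        · rintro ⟨h1, h2⟩ y hy
          rcases mem_pr_cases hy with rfl | rfl
          · exact ⟨fun h => absurd h h1,
              fun h => absurd (Finset.mem_singleton.1 h) ne_ee2⟩
          · exact ⟨fun _ => Finset.mem_singleton_self _, fun _ => h2⟩
        · intro h
          refine ⟨fun hm => ?_, (h _ ee2_mem_pr).2 (Finset.mem_singleton_self _)⟩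
          exact ne_ee2 (Finset.mem_singleton.1 ((h _ ee_mem_pr).1 hm)))]
    rw [h𝒜]
    convert card_slice P {-((2:ℝ) • ee d)} (Finset.singleton_subset_iff.2 ee2_mem_pr)
      ⟨_, Finset.mem_singleton_self _⟩ (d + 1) (by rw [Finset.card_singleton]; omega)
  -- cell (neither)
  have c00 : ((𝒜.filter (fun S => ¬(-ee d ∈ S))).filter
      (fun S => ¬(-((2:ℝ) • ee d) ∈ S))).card = 0 := by
    rw [Finset.card_eq_zero, Finset.filter_filter, h𝒜]
    convert cell_empty P using 2
  omega


end SDAux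

lemma simplicialDepth_eq_card_s13 (m : ℕ) (R : Finset (EuclideanSpace ℝ (Fin m)))
    (q : EuclideanSpace ℝ (Fin m)) :
    simplicialDepth m R q = (R.powerset.filter
      (fun (S : Finset (EuclideanSpace ℝ (Fin m))) => S.card = m + 1 ∧
        q ∈ convexHull ℝ (S : Set (EuclideanSpace ℝ (Fin m))))).card := by
  rw [simplicialDepth, ← Set.ncard_coe_finset]
  congr 1
  ext S
  simp only [Set.mem_setOf_eq, Finset.coe_filter, Finset.mem_powerset]

/-- with `P̃ = {(p,1) : p ∈ P}`, `e` the `(d+1)`-st standard basis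
vector, `Q = P̃ ∪ {−e, −2e}`, and `k_d` the number of `d`-element subsets of `P`
containing `0` in their convex hull, we have `σ_Q(0) = 2σ_P(0) + k_d`. -/
theorem simplicialDepth_caratheodory_reduction (d : ℕ) (hd : 1 ≤ d)
    (P : Finset (EuclideanSpace ℝ (Fin d))) (n : ℕ) (hn : P.card = n)
    (e : EuclideanSpace ℝ (Fin (d + 1)))
    (he : e = EuclideanSpace.single (Fin.last d) (1 : ℝ))
    (Q : Finset (EuclideanSpace ℝ (Fin (d + 1))))
    (hQ : Q = P.image (liftOne d) ∪ {-e, -((2 : ℝ) • e)})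
    (kd : ℕ)
    (hkd : kd = {S : Finset (EuclideanSpace ℝ (Fin d)) |
      S ⊆ P ∧ S.card = d ∧
        (0 : EuclideanSpace ℝ (Fin d)) ∈
          convexHull ℝ (S : Set (EuclideanSpace ℝ (Fin d)))}.ncard) :
    simplicialDepth (d + 1) Q 0 = 2 * simplicialDepth d P 0 + kd := by
  have hQ' : Q = P.image (liftOne d) ∪ SDAux.pr d := by
    rw [hQ, he]; rfl
  have hkd' : kd = (P.powerset.filter
      (fun (T : Finset (EuclideanSpace ℝ (Fin d))) => T.card = d ∧
        (0 : EuclideanSpace ℝ (Fin d)) ∈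
          convexHull ℝ (T : Set (EuclideanSpace ℝ (Fin d))))).card := by
    rw [hkd, ← Set.ncard_coe_finset]
    congr 1
    ext S
    simp only [Set.mem_setOf_eq, Finset.coe_filter, Finset.mem_powerset]
  rw [simplicialDepth_eq_card_s13, simplicialDepth_eq_card_s13, hQ', hkd']
  exact SDAux.main_count P
end

section
/- Let d ≥ 1, let P ⊂ ℝ^d be a finite set of n points, q ∈ ℝ^d, let h be a closed halfspace with q ∈ h, and let p ∈ P with p ∉ h. Then ω_{q;P}(p) ≤ |P ∩ h| · n^{d−1}, i.e., the number of (d+1)-element subsets of P that contain p and contain q in their convex hull is at most the number of points of P in h times n^{d−1}. -/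
/-- if `h = {x : ⟪v,x⟫ ≤ c}` is a closed halfspace containing `q` and
`p ∈ P` lies outside `h`, then `ω_{q;P}(p) ≤ |P ∩ h| · n^{d−1}`. -/
theorem weight_le_halfspace_count (d : ℕ) (hd : 1 ≤ d)
    (P : Finset (EuclideanSpace ℝ (Fin d))) (q : EuclideanSpace ℝ (Fin d))
    (v : EuclideanSpace ℝ (Fin d)) (c : ℝ) (hv : v ≠ 0)
    (hq : (inner ℝ v q : ℝ) ≤ c)
    (p : EuclideanSpace ℝ (Fin d)) (hpP : p ∈ P) (hph : ¬ (inner ℝ v p : ℝ) ≤ c) :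
    weight d P q p ≤
      {x ∈ (P : Set (EuclideanSpace ℝ (Fin d))) | (inner ℝ v x : ℝ) ≤ c}.ncard *
        P.card ^ (d - 1) := by
  classical

  set pred : (EuclideanSpace ℝ (Fin d)) → Prop := fun x => (inner ℝ v x : ℝ) ≤ c with hpred
  -- the finset of counted sets
  set W : Finset (Finset (EuclideanSpace ℝ (Fin d))) := P.powerset.filter
    (fun S => S.card = d + 1 ∧ p ∈ S ∧ q ∈ convexHull ℝ (S : Set (EuclideanSpace ℝ (Fin d)))) with hW
  have hweight : weight d P q p = W.card := by
    rw [weight, ← Set.ncard_coe_finset]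
    congr 1
    ext S
    simp [hW, Finset.mem_powerset, and_assoc]
  -- the halfspace count
  have hcount : {x ∈ (P : Set (EuclideanSpace ℝ (Fin d))) | (inner ℝ v x : ℝ) ≤ c}.ncard
      = (P.filter pred).card := by
    rw [← Set.ncard_coe_finset]
    congr 1
    ext x
    simp [hpred]
  rw [hweight, hcount]
  -- every counted S contains a point of the halfspace
  have key : ∀ S ∈ W, ∃ x ∈ S, pred x := by
    intro S hS
    simp only [hW, Finset.mem_filter, Finset.mem_powerset] at hS
    obtain ⟨hSP, _, _, hqS⟩ := hS
    by_contra hcon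
    push_neg at hcon
    have hlin : IsLinearMap ℝ (fun x : (EuclideanSpace ℝ (Fin d)) => (inner ℝ v x : ℝ)) :=
      ⟨fun x y => inner_add_right _ _ _, fun r x => real_inner_smul_right v x r⟩
    have hconv : Convex ℝ {x : (EuclideanSpace ℝ (Fin d)) | c < (inner ℝ v x : ℝ)} := convex_halfSpace_gt hlin c
    have hsub : (S : Set (EuclideanSpace ℝ (Fin d))) ⊆ {x : (EuclideanSpace ℝ (Fin d)) | c < (inner ℝ v x : ℝ)} := by
      intro x hx
      exact lt_of_not_ge (hcon x hx)
    have := convexHull_min hsub hconv hqS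
    exact absurd hq (not_le.mpr this)
  -- the choice of the halfspace point
  set r : Finset (EuclideanSpace ℝ (Fin d)) → (EuclideanSpace ℝ (Fin d)) := fun S => if h : ∃ x ∈ S, pred x then h.choose else 0 with hr
  have hrmem : ∀ S ∈ W, r S ∈ S ∧ pred (r S) := by
    intro S hS
    have h := key S hS
    simp only [hr, dif_pos h]
    exact ⟨h.choose_spec.1, h.choose_spec.2⟩
  -- the injection
  set f : Finset (EuclideanSpace ℝ (Fin d)) → (EuclideanSpace ℝ (Fin d)) × Finset (EuclideanSpace ℝ (Fin d)) := fun S => (r S, S \ {p, r S}) with hf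
  have hmap : ∀ S ∈ W, f S ∈ (P.filter pred) ×ˢ (P.powersetCard (d - 1)) := by
    intro S hS
    obtain ⟨hrS, hrp⟩ := hrmem S hS
    simp only [hW, Finset.mem_filter, Finset.mem_powerset] at hS
    obtain ⟨hSP, hScard, hpS, _⟩ := hS
    have hpne : p ≠ r S := fun h => hph (h ▸ hrp)
    refine Finset.mem_product.mpr ⟨Finset.mem_filter.mpr ⟨hSP hrS, hrp⟩, ?_⟩
    rw [Finset.mem_powersetCard]
    constructor
    · exact (Finset.sdiff_subset).trans hSP
    · have hsub : ({p, r S} : Finset (EuclideanSpace ℝ (Fin d))) ⊆ S := by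
        intro x hx
        rcases Finset.mem_insert.mp hx with h | h
        · exact h ▸ hpS
        · exact (Finset.mem_singleton.mp h) ▸ hrS
      rw [Finset.card_sdiff_of_subset hsub, Finset.card_insert_of_notMem
        (by simpa using hpne), Finset.card_singleton, hScard]
      omega
  have hinj : Set.InjOn f W := by
    intro S1 h1 S2 h2 heq
    have hrec : ∀ S ∈ W, S = (S \ {p, r S}) ∪ {p, r S} := by
      intro S hS
      obtain ⟨hrS, _⟩ := hrmem S hS
      have hpS : p ∈ S := (Finset.mem_filter.mp hS).2.2.1
      have hsub : ({p, r S} : Finset (EuclideanSpace ℝ (Fin d))) ⊆ S := by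
        intro x hx
        rcases Finset.mem_insert.mp hx with h | h
        · exact h ▸ hpS
        · exact (Finset.mem_singleton.mp h) ▸ hrS
      exact (Finset.sdiff_union_of_subset hsub).symm
    have h1' := hrec S1 h1
    have h2' := hrec S2 h2
    have hre : r S1 = r S2 := congrArg Prod.fst heq
    have hde : S1 \ {p, r S1} = S2 \ {p, r S2} := congrArg Prod.snd heq
    rw [hre] at hde
    rw [h1', h2', hre, hde]
  calc W.card ≤ ((P.filter pred) ×ˢ (P.powersetCard (d - 1))).card :=
        Finset.card_le_card_of_injOn f hmap hinj
    _ = (P.filter pred).card * (P.card.choose (d - 1)) := by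
        rw [Finset.card_product, Finset.card_powersetCard]
    _ ≤ (P.filter pred).card * P.card ^ (d - 1) :=
        Nat.mul_le_mul_left _ (Nat.choose_le_pow _ _)
end
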